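/- For all integers n ≥ 2 and k ≥ 2, there exists a family H of functions from {1,…,n} to {1,…,k²} with |H| ≤ k·⌈log₂(n+1)⌉ + 1 such that for every subset S ⊆ {1,…,n} with |S| ≤ k, some h ∈ H is injective on S. -/

import Mathlib

open Finset

private def cfun (n k : ℕ) (f : Fin n → Fin (k ^ 2)) : ℕ → ℕ :=
  fun x => if h : x - 1 < n then ((f ⟨x - 1, h⟩ : Fin (k ^ 2)) : ℕ) + 1 else 1

private lemma pair_card {α β : Type*} [Fintype α] [DecidableEq α] [Fintype β] [DecidableEq β]
    {j₁ j₂ : α} (hj : j₁ ≠ j₂) :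
    (Finset.univ.filter fun f : α → β => f j₁ = f j₂).card
      ≤ Fintype.card β ^ (Fintype.card α - 1) := by
  classical
  have hcard : Fintype.card ({i : α // i ≠ j₂} → β)
      = Fintype.card β ^ (Fintype.card α - 1) := by
    rw [Fintype.card_fun]
    congr 1
    simp [Fintype.card_subtype_compl]
  rw [← hcard, ← Finset.card_univ]
  apply Finset.card_le_card_of_injOn (fun f (i : {i : α // i ≠ j₂}) => f i.1)
  · intro f _; exact Finset.mem_univ _
  · intro f hf g hg hfg
    simp only [Finset.coe_filter, Set.mem_setOf_eq, Finset.mem_univ, true_and] at hf hg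
    funext i
    by_cases hi : i = j₂
    · subst hi
      have h1 : f j₁ = g j₁ := congrFun hfg ⟨j₁, hj⟩
      rw [← hf, ← hg, h1]
    · exact congrFun hfg ⟨i, hi⟩

private lemma bad_card (n k : ℕ) (hn : 2 ≤ n) (hk : 2 ≤ k) {S : Finset ℕ}
    (hS : S ⊆ Finset.Icc 1 n) (hSk : S.card ≤ k) :
    2 * (Finset.univ.filter fun f : Fin n → Fin (k ^ 2) => ¬ Set.InjOn (cfun n k f) S).card
      ≤ (k ^ 2) ^ n := by
  classical
  have npos : 0 < n := by omega
  set idx : ℕ → Fin n := fun x => ⟨(x - 1) % n, Nat.mod_lt _ npos⟩ with hidx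
  have hidxval : ∀ x ∈ S, (idx x : ℕ) = x - 1 := by
    intro x hx
    have := Finset.mem_Icc.mp (hS hx)
    simp only [hidx]
    exact Nat.mod_eq_of_lt (by omega)
  set P := S.offDiag.filter (fun p => p.1 < p.2) with hP
  -- inclusion in union of pair events
  have hsub : (Finset.univ.filter fun f : Fin n → Fin (k ^ 2) => ¬ Set.InjOn (cfun n k f) S)
      ⊆ P.biUnion (fun p => Finset.univ.filter fun f : Fin n → Fin (k ^ 2)
          => f (idx p.1) = f (idx p.2)) := by
    intro f hf
    simp only [Finset.mem_filter, Finset.mem_univ, true_and] at hf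
    rw [Set.InjOn] at hf
    push_neg at hf
    obtain ⟨x, hx, y, hy, hxy, hne⟩ := hf
    simp only [Finset.mem_coe] at hx hy
    have hx' := Finset.mem_Icc.mp (hS hx)
    have hy' := Finset.mem_Icc.mp (hS hy)
    have hfeq : f (idx x) = f (idx y) := by
      have h1 : x - 1 < n := by omega
      have h2 : y - 1 < n := by omega
      rw [cfun, cfun] at hxy
      rw [dif_pos h1, dif_pos h2] at hxy
      have : f ⟨x - 1, h1⟩ = f ⟨y - 1, h2⟩ := Fin.ext (by omega)
      have e1 : idx x = ⟨x - 1, h1⟩ := Fin.ext (hidxval x hx)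
      have e2 : idx y = ⟨y - 1, h2⟩ := Fin.ext (hidxval y hy)
      rw [e1, e2]; exact this
    rcases Ne.lt_or_gt hne with h | h
    · exact Finset.mem_biUnion.mpr ⟨(x, y), Finset.mem_filter.mpr
        ⟨Finset.mem_offDiag.mpr ⟨hx, hy, hne⟩, h⟩,
        Finset.mem_filter.mpr ⟨Finset.mem_univ _, hfeq⟩⟩
    · exact Finset.mem_biUnion.mpr ⟨(y, x), Finset.mem_filter.mpr
        ⟨Finset.mem_offDiag.mpr ⟨hy, hx, hne.symm⟩, h⟩,
        Finset.mem_filter.mpr ⟨Finset.mem_univ _, hfeq.symm⟩⟩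
  -- card of P : 2 * P.card = S.card * S.card - S.card
  have hPcard : 2 * P.card ≤ k * k := by
    have hswap : P.card = (S.offDiag.filter (fun p => ¬ p.1 < p.2)).card := by
      apply Finset.card_nbij' (fun p => (p.2, p.1)) (fun p => (p.2, p.1))
      · intro p hp
        simp only [hP, Finset.mem_coe, Finset.mem_filter, Finset.mem_offDiag] at hp ⊢
        obtain ⟨⟨h1, h2, h3⟩, h4⟩ := hp
        exact ⟨⟨h2, h1, h3.symm⟩, by omega⟩
      · intro p hp
        simp only [hP, Finset.mem_coe, Finset.mem_filter, Finset.mem_offDiag] at hp ⊢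
        obtain ⟨⟨h1, h2, h3⟩, h4⟩ := hp
        exact ⟨⟨h2, h1, h3.symm⟩, by omega⟩
      · intro p _; rfl
      · intro p _; rfl
    have hadd : P.card + (S.offDiag.filter (fun p => ¬ p.1 < p.2)).card = S.offDiag.card :=
      Finset.card_filter_add_card_filter_not _
    have hoff : S.offDiag.card = S.card * S.card - S.card := by
      convert Finset.offDiag_card S using 2
    have hsk : S.card * S.card ≤ k * k := Nat.mul_le_mul hSk hSk
    omega
  -- bound each pair event
  have hone : ∀ p ∈ P, (Finset.univ.filter fun f : Fin n → Fin (k ^ 2)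
      => f (idx p.1) = f (idx p.2)).card ≤ (k ^ 2) ^ (n - 1) := by
    intro p hp
    simp only [hP, Finset.mem_filter, Finset.mem_offDiag] at hp
    obtain ⟨⟨h1, h2, hne⟩, hlt⟩ := hp
    have hx' := Finset.mem_Icc.mp (hS h1)
    have hy' := Finset.mem_Icc.mp (hS h2)
    have hij : idx p.1 ≠ idx p.2 := by
      intro hcon
      have := congrArg Fin.val hcon
      rw [hidxval _ h1, hidxval _ h2] at this
      omega
    have := pair_card (β := Fin (k ^ 2)) hij
    simpa using this
  calc 2 * (Finset.univ.filter fun f : Fin n → Fin (k ^ 2)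
        => ¬ Set.InjOn (cfun n k f) S).card
      ≤ 2 * (P.biUnion (fun p => Finset.univ.filter fun f : Fin n → Fin (k ^ 2)
          => f (idx p.1) = f (idx p.2))).card :=
        Nat.mul_le_mul_left 2 (Finset.card_le_card hsub)
    _ ≤ 2 * ∑ p ∈ P, (Finset.univ.filter fun f : Fin n → Fin (k ^ 2)
          => f (idx p.1) = f (idx p.2)).card :=
        Nat.mul_le_mul_left 2 (Finset.card_biUnion_le)
    _ ≤ 2 * ∑ _p ∈ P, (k ^ 2) ^ (n - 1) :=
        Nat.mul_le_mul_left 2 (Finset.sum_le_sum hone)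
    _ = 2 * P.card * (k ^ 2) ^ (n - 1) := by rw [Finset.sum_const, smul_eq_mul]; ring
    _ ≤ (k * k) * (k ^ 2) ^ (n - 1) := Nat.mul_le_mul_right _ hPcard
    _ = (k ^ 2) ^ 1 * (k ^ 2) ^ (n - 1) := by ring
    _ = (k ^ 2) ^ n := by rw [← pow_add]; congr 1; omega


private lemma count_S (n k : ℕ) :
    ((Finset.Icc 1 n).powerset.filter fun S => S.card ≤ k).card ≤ (n + 1) ^ k := by
  induction k with
  | zero =>
    have hsub : ((Finset.Icc 1 n).powerset.filter fun S => S.card ≤ 0) ⊆ {∅} := by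
      intro S hS
      simp only [Finset.mem_filter, Nat.le_zero, Finset.card_eq_zero] at hS
      simp [hS.2]
    simpa using Finset.card_le_card hsub
  | succ k ih =>
    have hsub : ((Finset.Icc 1 n).powerset.filter fun S => S.card ≤ k + 1)
        ⊆ ((Finset.Icc 1 n).powerset.filter fun S => S.card ≤ k)
          ∪ (Finset.Icc 1 n).powersetCard (k + 1) := by
      intro S hS
      simp only [Finset.mem_filter, Finset.mem_union, Finset.mem_powerset,
        Finset.mem_powersetCard] at *
      obtain ⟨h1, h2⟩ := hS
      rcases eq_or_lt_of_le h2 with h | h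
      · exact Or.inr ⟨h1, h⟩
      · exact Or.inl ⟨h1, by omega⟩
    have hc : ((Finset.Icc 1 n).powersetCard (k + 1)).card ≤ n * (n + 1) ^ k := by
      rw [Finset.card_powersetCard, Nat.card_Icc]
      calc (n + 1 - 1).choose (k + 1) ≤ (n + 1 - 1) ^ (k + 1) := Nat.choose_le_pow _ _
        _ = n ^ (k + 1) := by norm_num
        _ = n * n ^ k := by ring
        _ ≤ n * (n + 1) ^ k :=
          Nat.mul_le_mul_left n (Nat.pow_le_pow_left (Nat.le_succ n) k)
    calc ((Finset.Icc 1 n).powerset.filter fun S => S.card ≤ k + 1).card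
        ≤ (((Finset.Icc 1 n).powerset.filter fun S => S.card ≤ k)
            ∪ (Finset.Icc 1 n).powersetCard (k + 1)).card := Finset.card_le_card hsub
      _ ≤ ((Finset.Icc 1 n).powerset.filter fun S => S.card ≤ k).card
            + ((Finset.Icc 1 n).powersetCard (k + 1)).card := Finset.card_union_le _ _
      _ ≤ (n + 1) ^ k + n * (n + 1) ^ k := Nat.add_le_add ih hc
      _ = (n + 1) ^ (k + 1) := by ring

theorem stmt_12 (n k : ℕ) (hn : 2 ≤ n) (hk : 2 ≤ k) :
    ∃ H : Finset (ℕ → ℕ),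
      (∀ h ∈ H, ∀ x ∈ Finset.Icc 1 n, h x ∈ Finset.Icc 1 (k ^ 2)) ∧
      H.card ≤ k * Nat.clog 2 (n + 1) + 1 ∧
      ∀ S ⊆ Finset.Icc 1 n, S.card ≤ k → ∃ h ∈ H, Set.InjOn h (S : Set ℕ) := by
  classical
  set m := k * Nat.clog 2 (n + 1) + 1 with hm
  set 𝒮 := (Finset.Icc 1 n).powerset.filter (fun S => S.card ≤ k) with h𝒮
  set Bad := fun S : Finset ℕ =>
    (Finset.univ.filter fun f : Fin n → Fin (k ^ 2) => ¬ Set.InjOn (cfun n k f) S) with hBad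
  set T := (Finset.univ.filter fun t : Fin m → (Fin n → Fin (k ^ 2)) =>
    ∃ S ∈ 𝒮, ∀ i, t i ∈ Bad S) with hT
  have hK2 : 2 ≤ k ^ 2 := le_trans hk (Nat.le_self_pow (by norm_num) k)
  have hKn2 : 2 ≤ (k ^ 2) ^ n := le_trans hK2 (Nat.le_self_pow (by omega) _)
  -- each bad set is at most half
  have hhalf : ∀ S ∈ 𝒮, (Bad S).card ≤ (k ^ 2) ^ n / 2 := by
    intro S hS
    rw [h𝒮, Finset.mem_filter, Finset.mem_powerset] at hS
    rw [Nat.le_div_iff_mul_le (by norm_num)]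
    rw [Nat.mul_comm]
    exact bad_card n k hn hk hS.1 hS.2
  -- count bad tuples
  have hTsub : T ⊆ 𝒮.biUnion (fun S => Fintype.piFinset fun _ : Fin m => Bad S) := by
    intro t ht
    rw [hT, Finset.mem_filter] at ht
    obtain ⟨-, S, hS, hSt⟩ := ht
    exact Finset.mem_biUnion.mpr ⟨S, hS, Fintype.mem_piFinset.mpr hSt⟩
  have hTcard : T.card ≤ 𝒮.card * ((k ^ 2) ^ n / 2) ^ m := by
    calc T.card ≤ (𝒮.biUnion (fun S => Fintype.piFinset fun _ : Fin m => Bad S)).card :=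
          Finset.card_le_card hTsub
      _ ≤ ∑ S ∈ 𝒮, (Fintype.piFinset fun _ : Fin m => Bad S).card := Finset.card_biUnion_le
      _ ≤ ∑ S ∈ 𝒮, ((k ^ 2) ^ n / 2) ^ m := by
          apply Finset.sum_le_sum
          intro S hS
          rw [Fintype.card_piFinset]
          calc ∏ _i : Fin m, (Bad S).card = (Bad S).card ^ m := by
                rw [Finset.prod_const, Finset.card_univ, Fintype.card_fin]
            _ ≤ ((k ^ 2) ^ n / 2) ^ m := Nat.pow_le_pow_left (hhalf S hS) m
      _ = 𝒮.card * ((k ^ 2) ^ n / 2) ^ m := by rw [Finset.sum_const, smul_eq_mul]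
  have hN : 𝒮.card < 2 ^ m := by
    calc 𝒮.card ≤ (n + 1) ^ k := count_S n k
      _ ≤ (2 ^ Nat.clog 2 (n + 1)) ^ k :=
          Nat.pow_le_pow_left (Nat.le_pow_clog (by norm_num) _) k
      _ = 2 ^ (k * Nat.clog 2 (n + 1)) := by rw [← pow_mul, Nat.mul_comm]
      _ < 2 ^ m := Nat.pow_lt_pow_right (by norm_num) (by omega)
  have hlt : 𝒮.card * ((k ^ 2) ^ n / 2) ^ m < ((k ^ 2) ^ n) ^ m := by
    have hpos : 0 < ((k ^ 2) ^ n / 2) ^ m := by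
      apply Nat.pow_pos
      omega
    calc 𝒮.card * ((k ^ 2) ^ n / 2) ^ m < 2 ^ m * ((k ^ 2) ^ n / 2) ^ m :=
          (Nat.mul_lt_mul_right hpos).mpr hN
      _ = (2 * ((k ^ 2) ^ n / 2)) ^ m := by rw [Nat.mul_pow]
      _ ≤ ((k ^ 2) ^ n) ^ m := by
          apply Nat.pow_le_pow_left
          calc 2 * ((k ^ 2) ^ n / 2) = (k ^ 2) ^ n / 2 * 2 := by ring
            _ ≤ (k ^ 2) ^ n := Nat.div_mul_le_self _ 2
  -- there is a good tuple
  obtain ⟨t, ht⟩ : ∃ t : Fin m → (Fin n → Fin (k ^ 2)), t ∉ T := by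
    by_contra hcon
    push_neg at hcon
    have huniv : (Finset.univ : Finset (Fin m → (Fin n → Fin (k ^ 2)))) ⊆ T := fun x _ => hcon x
    have hcards : ((k ^ 2) ^ n) ^ m ≤ T.card := by
      calc ((k ^ 2) ^ n) ^ m
          = Fintype.card (Fin m → (Fin n → Fin (k ^ 2))) := by
            rw [Fintype.card_fun, Fintype.card_fun]
            simp
        _ = (Finset.univ : Finset (Fin m → (Fin n → Fin (k ^ 2)))).card := by
            rw [Finset.card_univ]
        _ ≤ T.card := Finset.card_le_card huniv
    omega
  have hgood : ∀ S ∈ 𝒮, ∃ i, Set.InjOn (cfun n k (t i)) S := by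
    intro S hS
    by_contra hc
    push_neg at hc
    apply ht
    rw [hT, Finset.mem_filter]
    refine ⟨Finset.mem_univ _, S, hS, fun i => ?_⟩
    rw [hBad, Finset.mem_filter]
    exact ⟨Finset.mem_univ _, hc i⟩
  refine ⟨Finset.univ.image (fun i => cfun n k (t i)), ?_, ?_, ?_⟩
  · intro h hh x hx
    rw [Finset.mem_image] at hh
    obtain ⟨i, -, rfl⟩ := hh
    rw [Finset.mem_Icc] at hx ⊢
    rw [cfun]
    split
    · have := (t i ⟨x - 1, by omega⟩).isLt
      omega
    · omega
  · calc (Finset.univ.image (fun i => cfun n k (t i))).card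
        ≤ (Finset.univ : Finset (Fin m)).card := Finset.card_image_le
      _ = m := by simp
  · intro S hSsub hScard
    have hS : S ∈ 𝒮 := by
      rw [h𝒮, Finset.mem_filter, Finset.mem_powerset]; exact ⟨hSsub, hScard⟩
    obtain ⟨i, hi⟩ := hgood S hS
    exact ⟨cfun n k (t i), Finset.mem_image_of_mem _ (Finset.mem_univ i), hi⟩
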